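/- arXiv:2404.17689 — 2 statements merged into one kernel-verified Lean document; each statement's English description precedes it below -/
import Mathlib

section
/- Let f : ℝ^n → ℝ ∪ {∞} be a proper, lower semi-continuous function, let p > 0, and let x*, y* ∈ ℝ^n satisfy p‖x* − y*‖₂² + f(x*) ≤ p‖x − y*‖₂² + f(x) for all x ∈ ℝ^n. Then for every q ∈ [0,1] and every x ∈ ℝ^n, (1/2)‖q(x* − y*)‖₂² + (q/(2p)) f(x*) ≤ (1/2)‖x − (q y* + (1−q) x*)‖₂² + (q/(2p)) f(x); in particular x* ∈ prox_{(q/(2p)) f}(q y* + (1−q) x*) for q ∈ (0,1]. -/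
lemma norm_exp {E : Type*} [NormedAddCommGroup E] [InnerProductSpace ℝ E]
    (u v : E) (q : ℝ) :
    ‖u + q • v‖ ^ 2 = ‖u‖ ^ 2 + 2 * q * (inner ℝ u v : ℝ) + q ^ 2 * ‖v‖ ^ 2 := by
  rw [norm_add_sq_real, real_inner_smul_right, norm_smul]
  simp [mul_pow, sq_abs]
  ring

lemma norm_smul_sq {E : Type*} [NormedAddCommGroup E] [InnerProductSpace ℝ E]
    (v : E) (q : ℝ) : ‖q • v‖ ^ 2 = q ^ 2 * ‖v‖ ^ 2 := by
  rw [norm_smul]; simp [mul_pow, sq_abs]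

/-- Let `f : ℝ^n → ℝ ∪ {∞}` (modeled as an `EReal`-valued function never
taking the value `⊥`) be proper and lower semi-continuous, let `p > 0`, and suppose
`x*, y*` satisfy `p‖x* − y*‖² + f(x*) ≤ p‖x − y*‖² + f(x)` for all `x`.  Then for every
`q ∈ [0,1]` and every `x`,
`(1/2)‖q(x* − y*)‖² + (q/(2p)) f(x*) ≤ (1/2)‖x − (q y* + (1−q) x*)‖² + (q/(2p)) f(x)`;
in particular, for `q ∈ (0,1]`, `x* ∈ prox_{(q/(2p)) f}(q y* + (1−q) x*)`, i.e.
`(1/(2t))‖x* − y‖² + f(x*) ≤ (1/(2t))‖x − y‖² + f(x)` for all `x`, where `t := q/(2p)`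
and `y := q y* + (1−q) x*`. -/
theorem stmt1 (n : ℕ) (f : EuclideanSpace ℝ (Fin n) → EReal)
    (hproper : ∃ x, f x ≠ ⊤) (hnotbot : ∀ x, f x ≠ ⊥)
    (hlsc : LowerSemicontinuous f)
    (p : ℝ) (hp : 0 < p) (xs ys : EuclideanSpace ℝ (Fin n))
    (hmin : ∀ x, ((p * ‖xs - ys‖ ^ 2 : ℝ) : EReal) + f xs ≤
      ((p * ‖x - ys‖ ^ 2 : ℝ) : EReal) + f x) :
    (∀ q : ℝ, 0 ≤ q → q ≤ 1 → ∀ x,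
      (((1 / 2) * ‖q • (xs - ys)‖ ^ 2 : ℝ) : EReal) + ((q / (2 * p) : ℝ) : EReal) * f xs ≤
        (((1 / 2) * ‖x - (q • ys + (1 - q) • xs)‖ ^ 2 : ℝ) : EReal) +
          ((q / (2 * p) : ℝ) : EReal) * f x) ∧
    (∀ q : ℝ, 0 < q → q ≤ 1 → ∀ x,
      (((1 / (2 * (q / (2 * p)))) * ‖xs - (q • ys + (1 - q) • xs)‖ ^ 2 : ℝ) : EReal) + f xs ≤
        (((1 / (2 * (q / (2 * p)))) * ‖x - (q • ys + (1 - q) • xs)‖ ^ 2 : ℝ) : EReal) + f x) := by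
  obtain ⟨x0, hx0⟩ := hproper
  have hfs_top : f xs ≠ ⊤ := by
    intro h
    have h1 := hmin x0
    have hB0 : f x0 = (((f x0).toReal : ℝ) : EReal) := (EReal.coe_toReal hx0 (hnotbot x0)).symm
    rw [h, hB0, EReal.add_top_of_ne_bot (EReal.coe_ne_bot _), ← EReal.coe_add] at h1
    exact (EReal.coe_lt_top _).not_ge h1
  set A : ℝ := (f xs).toReal with hAdef
  have hA : f xs = (A : EReal) := (EReal.coe_toReal hfs_top (hnotbot xs)).symm
  have hreal : ∀ x : EuclideanSpace ℝ (Fin n), ∀ B : ℝ, f x = (B : EReal) →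
      p * ‖xs - ys‖ ^ 2 + A ≤ p * ‖x - ys‖ ^ 2 + B := by
    intro x B hB
    have := hmin x
    rw [hA, hB, ← EReal.coe_add, ← EReal.coe_add, EReal.coe_le_coe_iff] at this
    exact this
  have hvec : ∀ (x : EuclideanSpace ℝ (Fin n)) (q : ℝ),
      x - (q • ys + (1 - q) • xs) = (x - xs) + q • (xs - ys) := by
    intro x q; module
  have hkey2 : ∀ x : EuclideanSpace ℝ (Fin n), ∀ B : ℝ, f x = (B : EReal) →
      A - B ≤ p * ‖x - xs‖ ^ 2 + 2 * p * (inner ℝ (x - xs) (xs - ys) : ℝ) := by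
    intro x B hB
    have key := hreal x B hB
    rw [show x - ys = (x - xs) + (1:ℝ) • (xs - ys) by module,
      norm_exp (x - xs) (xs - ys) 1] at key
    nlinarith [key]
  constructor
  · intro q hq0 hq1 x
    rcases eq_or_lt_of_le hq0 with h0 | h0
    · rw [← h0, show ((0:ℝ) / (2 * p) : ℝ) = 0 by ring, EReal.coe_zero, zero_mul, zero_mul,
        add_zero, add_zero, zero_smul, norm_zero,
        show x - ((0:ℝ) • ys + (1 - (0:ℝ)) • xs) = x - xs by module]
      exact EReal.coe_le_coe_iff.mpr (by nlinarith [sq_nonneg ‖x - xs‖])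
    by_cases hx : f x = ⊤
    · rw [hx, EReal.mul_top_of_pos (by exact_mod_cast div_pos h0 (by linarith)),
        EReal.add_top_of_ne_bot (EReal.coe_ne_bot _)]
      exact le_top
    · have hB : f x = (((f x).toReal : ℝ) : EReal) := (EReal.coe_toReal hx (hnotbot x)).symm
      set B : ℝ := (f x).toReal
      have key2 := hkey2 x B hB
      rw [hA, hB, ← EReal.coe_mul, ← EReal.coe_mul, ← EReal.coe_add, ← EReal.coe_add,
        EReal.coe_le_coe_iff]
      rw [norm_smul_sq, hvec x q, norm_exp (x - xs) (xs - ys) q]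
      set U : ℝ := ‖x - xs‖ ^ 2 with hU
      set I : ℝ := (inner ℝ (x - xs) (xs - ys) : ℝ) with hI
      set c : ℝ := q / (2 * p) with hc
      have hc0 : 0 ≤ c := by positivity
      have hcp : c * p = q / 2 := by rw [hc]; field_simp
      have h3 : c * (A - B) ≤ c * (p * U + 2 * p * I) := mul_le_mul_of_nonneg_left key2 hc0
      have h4 : c * (p * U + 2 * p * I) = q / 2 * U + q * I := by
        linear_combination (U + 2 * I) * hcp
      have h5 : q / 2 * U ≤ 1 / 2 * U := by
        have : (0:ℝ) ≤ U := sq_nonneg _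
        nlinarith
      linarith
  · intro q hq0 hq1 x
    by_cases hx : f x = ⊤
    · rw [hx, EReal.add_top_of_ne_bot (EReal.coe_ne_bot _)]
      exact le_top
    · have hB : f x = (((f x).toReal : ℝ) : EReal) := (EReal.coe_toReal hx (hnotbot x)).symm
      set B : ℝ := (f x).toReal
      have key2 := hkey2 x B hB
      rw [hA, hB, ← EReal.coe_add, ← EReal.coe_add, EReal.coe_le_coe_iff]
      have hpq : 1 / (2 * (q / (2 * p))) = p / q := by
        field_simp
      rw [hpq, show xs - (q • ys + (1 - q) • xs) = q • (xs - ys) by module,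
        norm_smul_sq, hvec x q, norm_exp (x - xs) (xs - ys) q]
      set U : ℝ := ‖x - xs‖ ^ 2 with hU
      set I : ℝ := (inner ℝ (x - xs) (xs - ys) : ℝ) with hI
      set V : ℝ := ‖xs - ys‖ ^ 2 with hV
      set c : ℝ := p / q with hc
      have hcq : c * q = p := by rw [hc]; field_simp
      have hpc : p ≤ c := by
        rw [hc, le_div_iff₀ hq0]
        nlinarith
      have h5 : p * U ≤ c * U := mul_le_mul_of_nonneg_right hpc (sq_nonneg _)
      have h7 : c * (U + 2 * q * I + q ^ 2 * V) = c * U + 2 * p * I + c * (q ^ 2 * V) := by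
        linear_combination 2 * I * hcq
      linarith [key2, h5]
end

section
/- Suppose (u*, v*) ∈ ℝ^n × ℝ^m is a global minimizer of F over ℝ^n × ℝ^m. Then for every α ∈ (0,1]: (i) u* ∈ prox_{αγ‖·‖₀}((1−α)u* + α D v*), i.e., (1/(2αγ))‖u* − ((1−α)u* + αDv*)‖₂² + ‖u*‖₀ ≤ (1/(2αγ))‖u − ((1−α)u* + αDv*)‖₂² + ‖u‖₀ for all u ∈ ℝ^n; and (ii) v* is a global minimizer over ℝ^m of v ↦ ψ(Bv) + (λ/(2γ))‖v − Dᵀu*‖₂², i.e., v* = S(Dᵀu*). -/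
open Matrix

noncomputable section

/-- Matrix–vector multiplication as a map between Euclidean spaces. -/
def mulVecE {n m : ℕ} (A : Matrix (Fin n) (Fin m) ℝ) (v : EuclideanSpace ℝ (Fin m)) :
    EuclideanSpace ℝ (Fin n) :=
  (EuclideanSpace.equiv (Fin n) ℝ).symm (A.mulVec ((EuclideanSpace.equiv (Fin m) ℝ) v))

/-- The `ℓ₀` "norm": the number of nonzero components, as a real number. -/
def l0 {n : ℕ} (u : EuclideanSpace ℝ (Fin n)) : ℝ := ({i : Fin n | u i ≠ 0}).ncard

/-- The objective `F(u,v) = ψ(Bv) + (λ/(2γ))‖u − Dv‖₂² + λ‖u‖₀`. -/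
def Fobj {n m p : ℕ} (ψ : EuclideanSpace ℝ (Fin p) → ℝ) (B : Matrix (Fin p) (Fin m) ℝ)
    (D : Matrix (Fin n) (Fin m) ℝ) (lam γ : ℝ) (u : EuclideanSpace ℝ (Fin n))
    (v : EuclideanSpace ℝ (Fin m)) : ℝ :=
  ψ (mulVecE B v) + (lam / (2 * γ)) * ‖u - mulVecE D v‖ ^ 2 + lam * l0 u

lemma inner_mulVecE' {n m : ℕ} (D : Matrix (Fin n) (Fin m) ℝ) (u : EuclideanSpace ℝ (Fin n))
    (v : EuclideanSpace ℝ (Fin m)) :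
    (inner ℝ u (mulVecE D v) : ℝ) = inner ℝ (mulVecE Dᵀ u) v := by
  have h1 : (inner ℝ u (mulVecE D v) : ℝ) = u ⬝ᵥ (D.mulVec v) := by
    simp [mulVecE, PiLp.inner_apply, dotProduct, RCLike.inner_apply, mul_comm, WithLp.equiv, Equiv.refl_apply]
    exact Finset.sum_congr rfl (fun x _ => mul_comm _ _)
  have h2 : (inner ℝ (mulVecE Dᵀ u) v : ℝ) = (Dᵀ.mulVec u) ⬝ᵥ v := by
    simp [mulVecE, PiLp.inner_apply, dotProduct, RCLike.inner_apply, mul_comm, WithLp.equiv, Equiv.refl_apply]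
    exact Finset.sum_congr rfl (fun x _ => mul_comm _ _)
  rw [h1, h2, Matrix.dotProduct_mulVec, Matrix.mulVec_transpose]

lemma mulVecE_mulVecE {n m k : ℕ} (A : Matrix (Fin n) (Fin m) ℝ) (C : Matrix (Fin m) (Fin k) ℝ)
    (v : EuclideanSpace ℝ (Fin k)) : mulVecE A (mulVecE C v) = mulVecE (A * C) v := by
  simp [mulVecE, Matrix.mulVec_mulVec]
  exact Matrix.mulVec_mulVec ((EuclideanSpace.equiv (Fin k) ℝ) v) A C

lemma norm_mulVecE {n m : ℕ} (D : Matrix (Fin n) (Fin m) ℝ) (hD : Dᵀ * D = 1)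
    (v : EuclideanSpace ℝ (Fin m)) : ‖mulVecE D v‖ ^ 2 = ‖v‖ ^ 2 := by
  have h : (inner ℝ (mulVecE D v) (mulVecE D v) : ℝ) = inner ℝ v v := by
    rw [inner_mulVecE', mulVecE_mulVecE, hD]
    congr 1
    simp [mulVecE]
  rw [← real_inner_self_eq_norm_sq, ← real_inner_self_eq_norm_sq, h]

/-- If `(u*, v*)` is a global minimizer of `F`, then for every `α ∈ (0,1]`:
(i) `u* ∈ prox_{αγ‖·‖₀}((1−α)u* + αDv*)`, and (ii) `v* = S(Dᵀu*)`, where `S(x)` is the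
unique global minimizer of `v ↦ ψ(Bv) + (λ/(2γ))‖v − x‖₂²`. -/
theorem stmt3 (n m p : ℕ) (ψ : EuclideanSpace ℝ (Fin p) → ℝ)
    (hconv : ConvexOn ℝ Set.univ ψ) (hdiff : ContDiff ℝ 1 ψ)
    (hbdd : BddBelow (Set.range ψ))
    (B : Matrix (Fin p) (Fin m) ℝ) (D : Matrix (Fin n) (Fin m) ℝ) (hD : Dᵀ * D = 1)
    (lam γ : ℝ) (hlam : 0 < lam) (hγ : 0 < γ)
    (S : EuclideanSpace ℝ (Fin m) → EuclideanSpace ℝ (Fin m))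
    (hS : ∀ x v, ψ (mulVecE B (S x)) + (lam / (2 * γ)) * ‖S x - x‖ ^ 2 ≤
      ψ (mulVecE B v) + (lam / (2 * γ)) * ‖v - x‖ ^ 2)
    (hSuniq : ∀ x v, (∀ w, ψ (mulVecE B v) + (lam / (2 * γ)) * ‖v - x‖ ^ 2 ≤
      ψ (mulVecE B w) + (lam / (2 * γ)) * ‖w - x‖ ^ 2) → v = S x)
    (us : EuclideanSpace ℝ (Fin n)) (vs : EuclideanSpace ℝ (Fin m))
    (hmin : ∀ u v, Fobj ψ B D lam γ us vs ≤ Fobj ψ B D lam γ u v)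
    (α : ℝ) (hα0 : 0 < α) (hα1 : α ≤ 1) :
    (∀ u : EuclideanSpace ℝ (Fin n),
      (1 / (2 * (α * γ))) * ‖us - ((1 - α) • us + α • mulVecE D vs)‖ ^ 2 + l0 us ≤
        (1 / (2 * (α * γ))) * ‖u - ((1 - α) • us + α • mulVecE D vs)‖ ^ 2 + l0 u) ∧
    vs = S (mulVecE Dᵀ us) := by
  constructor
  · intro u
    set d : EuclideanSpace ℝ (Fin n) := us - mulVecE D vs with hd
    set w : EuclideanSpace ℝ (Fin n) := u - us with hw
    have hA : us - ((1 - α) • us + α • mulVecE D vs) = α • d := by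
      rw [hd]; module
    have hB : u - ((1 - α) • us + α • mulVecE D vs) = w + α • d := by
      rw [hd, hw]; module
    have hB' : u - mulVecE D vs = w + d := by rw [hd, hw]; abel
    set I : ℝ := inner ℝ w d with hI
    have nA : ‖α • d‖ ^ 2 = α ^ 2 * ‖d‖ ^ 2 := by
      rw [norm_smul]; rw [Real.norm_eq_abs, abs_of_pos hα0]; ring
    have nB : ‖w + α • d‖ ^ 2 = ‖w‖ ^ 2 + 2 * (α * I) + α ^ 2 * ‖d‖ ^ 2 := by
      rw [norm_add_sq_real, real_inner_smul_right, nA, hI]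
    have nC : ‖w + d‖ ^ 2 = ‖w‖ ^ 2 + 2 * I + ‖d‖ ^ 2 := by
      rw [norm_add_sq_real, hI]
    have hkey := hmin u vs
    simp only [Fobj] at hkey
    rw [hB', ← hd, nC] at hkey
    -- hkey : ψ (B vs) + (lam/(2γ)) ‖d‖² + lam * l0 us ≤ ψ (B vs) + (lam/(2γ)) (‖w‖²+2I+‖d‖²) + lam * l0 u
    have hγ2 : (0:ℝ) < 2 * γ := by linarith
    have that : (lam * l0 us - lam * l0 u) * (2 * γ) ≤ lam * (‖w‖ ^ 2 + 2 * I) := by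
      have e : lam / (2 * γ) * (‖w‖ ^ 2 + 2 * I + ‖d‖ ^ 2) - lam / (2 * γ) * ‖d‖ ^ 2
          = lam * (‖w‖ ^ 2 + 2 * I) / (2 * γ) := by ring
      have h3 : lam * l0 us - lam * l0 u ≤ lam * (‖w‖ ^ 2 + 2 * I) / (2 * γ) := by
        rw [← e]; linarith
      rw [← le_div_iff₀ hγ2]; exact h3
    have key : 2 * γ * (l0 us - l0 u) ≤ ‖w‖ ^ 2 + 2 * I := by
      have h4 : lam * (2 * γ * (l0 us - l0 u)) ≤ lam * (‖w‖ ^ 2 + 2 * I) := by nlinarith [that]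
      exact le_of_mul_le_mul_left h4 hlam
    have key2 : 2 * (α * γ) * (l0 us - l0 u) ≤ ‖w‖ ^ 2 + 2 * (α * I) := by
      nlinarith [mul_le_mul_of_nonneg_left key hα0.le,
        mul_nonneg (by linarith : (0:ℝ) ≤ 1 - α) (sq_nonneg ‖w‖)]
    rw [hA, hB, nA, nB]
    have h2 : (0:ℝ) < 2 * (α * γ) := by positivity
    have goal' : α ^ 2 * ‖d‖ ^ 2 + 2 * (α * γ) * l0 us
        ≤ (‖w‖ ^ 2 + 2 * (α * I) + α ^ 2 * ‖d‖ ^ 2) + 2 * (α * γ) * l0 u := by linarith [key2]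
    have ht : (0:ℝ) < 1 / (2 * (α * γ)) := by positivity
    have := mul_le_mul_of_nonneg_left goal' ht.le
    have e1 : 1 / (2 * (α * γ)) * (α ^ 2 * ‖d‖ ^ 2 + 2 * (α * γ) * l0 us)
        = 1 / (2 * (α * γ)) * (α ^ 2 * ‖d‖ ^ 2) + l0 us := by field_simp
    have e2 : 1 / (2 * (α * γ)) * ((‖w‖ ^ 2 + 2 * (α * I) + α ^ 2 * ‖d‖ ^ 2) + 2 * (α * γ) * l0 u)
        = 1 / (2 * (α * γ)) * (‖w‖ ^ 2 + 2 * (α * I) + α ^ 2 * ‖d‖ ^ 2) + l0 u := by field_simp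
    rw [e1, e2] at this
    exact this
  · apply hSuniq
    intro w
    have hid : ∀ v : EuclideanSpace ℝ (Fin m), ‖us - mulVecE D v‖ ^ 2
        = ‖v - mulVecE Dᵀ us‖ ^ 2 + (‖us‖ ^ 2 - ‖mulVecE Dᵀ us‖ ^ 2) := by
      intro v
      have h1 := norm_sub_sq_real us (mulVecE D v)
      have h2 := norm_sub_sq_real v (mulVecE Dᵀ us)
      have h3 := inner_mulVecE' D us v
      have h4 := norm_mulVecE D hD v
      have h5 : (inner ℝ v (mulVecE Dᵀ us) : ℝ) = inner ℝ (mulVecE Dᵀ us) v :=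
        real_inner_comm _ _
      linarith
    have hkey := hmin us w
    simp only [Fobj] at hkey
    rw [hid vs, hid w] at hkey
    linarith
end
end
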